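/- Let τ > 0 and let X be a real Banach space. Let U(t,s), R(t,s) ∈ L(X), for 0 ≤ s ≤ t ≤ τ, be two families of bounded linear operators such that: (t,s) ↦ U(t,s)x and (t,s) ↦ R(t,s)x are continuous for every x ∈ X; both families are uniformly bounded in operator norm; both (t,s) ↦ U(t,s) and (t,s) ↦ R(t,s) are continuous in operator norm on {(t,s) : 0 ≤ s < t ≤ τ}; U(t,t) = I and U(t,r)U(r,s) = U(t,s) whenever 0 ≤ s ≤ r ≤ t ≤ τ. Suppose there exist families Q(r,s), P(r,s) ∈ L(X) (0 ≤ s ≤ r ≤ τ), uniformly bounded in operator norm and with (r,s) ↦ Q(r,s)x and (r,s) ↦ P(r,s)x continuous for each x ∈ X, such that for all 0 ≤ s ≤ t ≤ τ and x ∈ X: R(t,s)x = U(t,s)x + ∫ₛᵗ U(t,r)Q(r,s)x dr and U(t,s)x = R(t,s)x + ∫ₛᵗ R(t,r)P(r,s)x dr. Then U(t,s) is a compact operator for all t − s > 0 if and only if R(t,s) is a compact operator for all t − s > 0. -/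

import Mathlib

open MeasureTheory

open Set

section Aux

set_option linter.unusedSectionVars false

variable {X : Type*} [NormedAddCommGroup X] [NormedSpace ℝ X] [CompleteSpace X]

lemma integ_aux {F : ℝ → X →L[ℝ] X} {a b : ℝ} (hab : a ≤ b) (x : X)
    (hF : ∀ y : X, ContinuousOn (fun r => F r y) (Set.Icc a b)) :
    IntervalIntegrable (fun r => F r x) volume a b :=
  ((hF x).mono (by rw [Set.uIcc_of_le hab])).intervalIntegrable

/-- The operator `x ↦ ∫ r in a..b, F r x`. -/
noncomputable def intOp (F : ℝ → X →L[ℝ] X) (a b : ℝ) (C : ℝ) (hab : a ≤ b)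
    (hF : ∀ y : X, ContinuousOn (fun r => F r y) (Set.Icc a b))
    (hC : ∀ r ∈ Set.Icc a b, ‖F r‖ ≤ C) : X →L[ℝ] X :=
  LinearMap.mkContinuous
    { toFun := fun x => ∫ r in a..b, F r x
      map_add' := fun x y => by
        rw [← intervalIntegral.integral_add (integ_aux hab x hF) (integ_aux hab y hF)]
        simp
      map_smul' := fun c x => by
        rw [← intervalIntegral.integral_smul]
        simp }
    (C * (b - a))
    (by
      intro x
      have : ∀ r ∈ Set.uIoc a b, ‖F r x‖ ≤ C * ‖x‖ := by
        intro r hr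
        have hr' : r ∈ Set.Icc a b := by
          rw [Set.uIoc_of_le hab] at hr; exact ⟨le_of_lt hr.1, hr.2⟩
        exact le_trans ((F r).le_opNorm x)
          (mul_le_mul_of_nonneg_right (hC r hr') (norm_nonneg x))
      calc ‖∫ r in a..b, F r x‖ ≤ C * ‖x‖ * |b - a| :=
            intervalIntegral.norm_integral_le_of_norm_le_const this
        _ = C * (b - a) * ‖x‖ := by
            rw [abs_of_nonneg (by linarith)]; ring)

lemma intOp_apply (F : ℝ → X →L[ℝ] X) (a b : ℝ) (C : ℝ) (hab : a ≤ b)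
    (hF : ∀ y : X, ContinuousOn (fun r => F r y) (Set.Icc a b))
    (hC : ∀ r ∈ Set.Icc a b, ‖F r‖ ≤ C) (x : X) :
    intOp F a b C hab hF hC x = ∫ r in a..b, F r x := rfl

lemma intOp_norm_apply_le (F : ℝ → X →L[ℝ] X) (a b : ℝ) (C : ℝ) (hab : a ≤ b)
    (hF : ∀ y : X, ContinuousOn (fun r => F r y) (Set.Icc a b))
    (hC : ∀ r ∈ Set.Icc a b, ‖F r‖ ≤ C) (x : X) :
    ‖intOp F a b C hab hF hC x‖ ≤ C * (b - a) * ‖x‖ := by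
  have : ∀ r ∈ Set.uIoc a b, ‖F r x‖ ≤ C * ‖x‖ := by
    intro r hr
    have hr' : r ∈ Set.Icc a b := by
      rw [Set.uIoc_of_le hab] at hr; exact ⟨le_of_lt hr.1, hr.2⟩
    exact le_trans ((F r).le_opNorm x)
      (mul_le_mul_of_nonneg_right (hC r hr') (norm_nonneg x))
  calc ‖intOp F a b C hab hF hC x‖ ≤ C * ‖x‖ * |b - a| :=
        intervalIntegral.norm_integral_le_of_norm_le_const this
    _ = C * (b - a) * ‖x‖ := by rw [abs_of_nonneg (by linarith)]; ring

/-- strong continuity of `r ↦ V r (W r x)`. -/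
lemma strong_comp {E : Set ℝ} {V W : ℝ → X →L[ℝ] X} {MV : ℝ}
    (hMV : ∀ r ∈ E, ‖V r‖ ≤ MV)
    (hVx : ∀ y : X, ContinuousOn (fun r => V r y) E)
    (hWx : ∀ y : X, ContinuousOn (fun r => W r y) E) (x : X) :
    ContinuousOn (fun r => V r (W r x)) E := by
  intro r₀ hr₀
  have h1 : Filter.Tendsto (fun r => ‖W r x - W r₀ x‖) (nhdsWithin r₀ E) (nhds 0) := by
    have := (hWx x r₀ hr₀)
    rw [ContinuousWithinAt] at this
    exact tendsto_iff_norm_sub_tendsto_zero.mp this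
  have h2 : Filter.Tendsto (fun r => ‖V r (W r₀ x) - V r₀ (W r₀ x)‖)
      (nhdsWithin r₀ E) (nhds 0) := by
    have := (hVx (W r₀ x) r₀ hr₀)
    rw [ContinuousWithinAt] at this
    exact tendsto_iff_norm_sub_tendsto_zero.mp this
  have hg : Filter.Tendsto (fun r => MV * ‖W r x - W r₀ x‖ +
      ‖V r (W r₀ x) - V r₀ (W r₀ x)‖) (nhdsWithin r₀ E) (nhds 0) := by
    have := (h1.const_mul MV).add h2
    simpa using this
  rw [ContinuousWithinAt, tendsto_iff_norm_sub_tendsto_zero]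
  apply squeeze_zero_norm' _ hg
  filter_upwards [self_mem_nhdsWithin] with r hr
  rw [Real.norm_eq_abs, abs_of_nonneg (norm_nonneg _)]
  calc ‖V r (W r x) - V r₀ (W r₀ x)‖
      = ‖V r (W r x - W r₀ x) + (V r (W r₀ x) - V r₀ (W r₀ x))‖ := by
        rw [map_sub]; congr 1; abel
    _ ≤ ‖V r (W r x - W r₀ x)‖ + ‖V r (W r₀ x) - V r₀ (W r₀ x)‖ := norm_add_le _ _
    _ ≤ MV * ‖W r x - W r₀ x‖ + ‖V r (W r₀ x) - V r₀ (W r₀ x)‖ := by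
        gcongr
        exact le_trans ((V r).le_opNorm _)
          (mul_le_mul_of_nonneg_right (hMV r hr) (norm_nonneg _))

/-- Riemann-sum approximation: the integral operator of `r ↦ V r ∘ W r` over `[a,b]`
is approximated in norm by compact operators, when `V` is norm-continuous and
pointwise compact on `[a,b]`. -/
lemma riemann_approx (V W : ℝ → X →L[ℝ] X) (a b : ℝ) (hab : a ≤ b) (MW : ℝ)
    (hMW : ∀ r ∈ Set.Icc a b, ‖W r‖ ≤ MW)
    (hWx : ∀ y : X, ContinuousOn (fun r => W r y) (Set.Icc a b))
    (hFx : ∀ y : X, ContinuousOn (fun r => V r (W r y)) (Set.Icc a b))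
    (hVn : ContinuousOn V (Set.Icc a b))
    (hVc : ∀ r ∈ Set.Icc a b, IsCompactOperator (V r))
    (ε : ℝ) (hε : 0 < ε) :
    ∃ T : X →L[ℝ] X, IsCompactOperator T ∧
      ∀ x : X, ‖(∫ r in a..b, V r (W r x)) - T x‖ ≤ ε * ‖x‖ := by
  have hMW0 : 0 ≤ MW := le_trans (norm_nonneg _) (hMW a ⟨le_rfl, hab⟩)
  -- choose the modulus η
  set η : ℝ := ε / (MW * (b - a) + 1) with hη_def
  have hden : 0 < MW * (b - a) + 1 := by nlinarith
  have hη : 0 < η := div_pos hε hden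
  have hηe : η * (MW * (b - a)) ≤ ε := by
    rw [hη_def, div_mul_eq_mul_div, div_le_iff₀ hden]
    nlinarith [hε.le]
  -- uniform continuity of V on [a,b]
  obtain ⟨δ', hδ', hδ'V⟩ := Metric.uniformContinuousOn_iff.mp
    (isCompact_Icc.uniformContinuousOn_of_continuous hVn) η hη
  -- partition
  obtain ⟨n, hn⟩ := exists_nat_gt ((b - a) / δ')
  have hn0 : 0 < n := by
    have h1 : (0:ℝ) ≤ (b - a) / δ' := div_nonneg (by linarith) hδ'.le
    have h2 : (0:ℝ) < n := lt_of_le_of_lt h1 hn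
    exact_mod_cast h2
  have hncast : (0:ℝ) < n := by exact_mod_cast hn0
  set h : ℝ := (b - a) / n with hh_def
  have hh0 : 0 ≤ h := div_nonneg (by linarith) hncast.le
  have hnh : (n:ℝ) * h = b - a := by
    rw [hh_def]; field_simp
  have hhlt : h < δ' := by
    rw [hh_def, div_lt_iff₀ hncast]
    have := (div_lt_iff₀ hδ').mp hn
    nlinarith
  set p : ℕ → ℝ := fun i => a + (min i n : ℕ) * h with hp_def
  have hp0 : p 0 = a := by simp [hp_def]
  have hpn : p n = b := by simp [hp_def]; linarith [hnh]
  have hpa : ∀ i, a ≤ p i := fun i => by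
    have : (0:ℝ) ≤ (min i n : ℕ) * h := mul_nonneg (Nat.cast_nonneg _) hh0
    simp only [hp_def]; linarith
  have hpb : ∀ i, p i ≤ b := fun i => by
    have h1 : ((min i n : ℕ) : ℝ) ≤ (n : ℝ) := by exact_mod_cast min_le_right i n
    have : ((min i n : ℕ) : ℝ) * h ≤ (n:ℝ) * h := mul_le_mul_of_nonneg_right h1 hh0
    simp only [hp_def]; linarith [hnh]
  have hp_mono : ∀ i, p i ≤ p (i + 1) := fun i => by
    have h1 : ((min i n : ℕ) : ℝ) ≤ ((min (i+1) n : ℕ) : ℝ) := by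
      exact_mod_cast min_le_min (Nat.le_succ i) le_rfl
    simp only [hp_def]
    have := mul_le_mul_of_nonneg_right h1 hh0
    linarith
  have hsub : ∀ i, Set.Icc (p i) (p (i+1)) ⊆ Set.Icc a b := fun i r hr =>
    ⟨le_trans (hpa i) hr.1, le_trans hr.2 (hpb (i+1))⟩
  have hstep : ∀ i < n, p (i + 1) - p i = h := by
    intro i hi
    have h1 : min i n = i := min_eq_left hi.le
    have h2 : min (i+1) n = i + 1 := min_eq_left hi
    simp only [hp_def, h1, h2]
    push_cast; ring
  -- the approximating operator
  set C : ℕ → (X →L[ℝ] X) := fun i =>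
    intOp W (p i) (p (i+1)) MW (hp_mono i)
      (fun y => (hWx y).mono (hsub i)) (fun r hr => hMW r (hsub i hr)) with hC_def
  refine ⟨∑ i ∈ Finset.range n, (V (p i)).comp (C i), ?_, ?_⟩
  · -- compactness of the sum
    apply Finset.sum_induction _ (fun S : X →L[ℝ] X => IsCompactOperator S)
    · intro f g hf hg
      have := hf.add hg
      rwa [← ContinuousLinearMap.coe_add'] at this
    · exact isCompactOperator_zero
    · intro i _
      exact (hVc (p i) ⟨hpa i, hpb i⟩).comp_clm (C i)
  · intro x
    have hint : ∀ c d : ℝ, c ≤ d → Set.Icc c d ⊆ Set.Icc a b →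
        IntervalIntegrable (fun r => V r (W r x)) volume c d := by
      intro c d hcd hsub'
      exact (((hFx x).mono hsub').mono (by rw [Set.uIcc_of_le hcd])).intervalIntegrable
    have hsplit : (∫ r in a..b, V r (W r x)) =
        ∑ i ∈ Finset.range n, ∫ r in (p i)..(p (i+1)), V r (W r x) := by
      rw [← hp0, ← hpn]
      exact (intervalIntegral.sum_integral_adjacent_intervals
        (fun k _ => hint (p k) (p (k+1)) (hp_mono k) (hsub k))).symm
    have hTx : ∀ i, (V (p i)).comp (C i) x = ∫ r in (p i)..(p (i+1)), V (p i) (W r x) := by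
      intro i
      have hWint : IntervalIntegrable (fun r => W r x) volume (p i) (p (i+1)) :=
        integ_aux (hp_mono i) x (fun y => (hWx y).mono (hsub i))
      simpa [hC_def, intOp_apply] using ((V (p i)).intervalIntegral_comp_comm hWint).symm
    calc ‖(∫ r in a..b, V r (W r x)) - (∑ i ∈ Finset.range n, (V (p i)).comp (C i)) x‖
        = ‖∑ i ∈ Finset.range n,
            ∫ r in (p i)..(p (i+1)), (V r (W r x) - V (p i) (W r x))‖ := by
          rw [hsplit, ContinuousLinearMap.sum_apply, ← Finset.sum_sub_distrib]
          congr 1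
          refine Finset.sum_congr rfl fun i _ => ?_
          rw [hTx i]
          have hg : IntervalIntegrable (fun r => V (p i) (W r x)) volume (p i) (p (i+1)) := by
            have hc : ContinuousOn (fun r => V (p i) (W r x)) (Set.Icc (p i) (p (i+1))) :=
              (V (p i)).continuous.comp_continuousOn ((hWx x).mono (hsub i))
            exact (hc.mono (by rw [Set.uIcc_of_le (hp_mono i)])).intervalIntegrable
          exact (intervalIntegral.integral_sub (hint (p i) (p (i+1)) (hp_mono i) (hsub i)) hg).symm
      _ ≤ ∑ i ∈ Finset.range n,
            ‖∫ r in (p i)..(p (i+1)), (V r (W r x) - V (p i) (W r x))‖ :=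
          norm_sum_le _ _
      _ ≤ ∑ i ∈ Finset.range n, η * MW * ‖x‖ * (p (i+1) - p i) := by
          refine Finset.sum_le_sum fun i hi => ?_
          have hb : ∀ r ∈ Set.uIoc (p i) (p (i+1)),
              ‖V r (W r x) - V (p i) (W r x)‖ ≤ η * (MW * ‖x‖) := by
            intro r hr
            rw [Set.uIoc_of_le (hp_mono i)] at hr
            have hrI : r ∈ Set.Icc a b := hsub i ⟨hr.1.le, hr.2⟩
            have hd : dist r (p i) < δ' := by
              rw [Real.dist_eq, abs_of_nonneg (by linarith [hr.1.le])]
              have := hstep i (Finset.mem_range.mp hi)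
              linarith [hr.2]
            have hVd : ‖V r - V (p i)‖ < η := by
              rw [← dist_eq_norm]
              exact hδ'V r hrI (p i) ⟨hpa i, hpb i⟩ hd
            calc ‖V r (W r x) - V (p i) (W r x)‖ = ‖(V r - V (p i)) (W r x)‖ := by
                  simp [ContinuousLinearMap.sub_apply]
              _ ≤ ‖V r - V (p i)‖ * ‖W r x‖ := (V r - V (p i)).le_opNorm _
              _ ≤ η * (MW * ‖x‖) := by
                  apply mul_le_mul hVd.le _ (norm_nonneg _) hη.le
                  exact le_trans ((W r).le_opNorm x)
                    (mul_le_mul_of_nonneg_right (hMW r hrI) (norm_nonneg x))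
          calc ‖∫ r in (p i)..(p (i+1)), (V r (W r x) - V (p i) (W r x))‖
              ≤ η * (MW * ‖x‖) * |p (i+1) - p i| :=
                intervalIntegral.norm_integral_le_of_norm_le_const hb
            _ = η * MW * ‖x‖ * (p (i+1) - p i) := by
                rw [abs_of_nonneg (by linarith [hp_mono i])]; ring
      _ = η * MW * ‖x‖ * (b - a) := by
          rw [← Finset.mul_sum, Finset.sum_range_sub p n, hp0, hpn]
      _ ≤ ε * ‖x‖ := by
          have : η * MW * ‖x‖ * (b - a) = (η * (MW * (b-a))) * ‖x‖ := by ring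
          rw [this]
          exact mul_le_mul_of_nonneg_right hηe (norm_nonneg x)

/-- Key lemma: the operator `x ↦ ∫ r in s..t, V r (W r x)` is compact when `V` is
uniformly bounded, strongly continuous on `[s,t]`, norm-continuous and pointwise
compact on `[s,t)`, and `W` is uniformly bounded and strongly continuous on `[s,t]`. -/
lemma key_lemma (s t : ℝ) (hst : s < t) (V W : ℝ → X →L[ℝ] X) (MV MW : ℝ)
    (hMV : ∀ r ∈ Set.Icc s t, ‖V r‖ ≤ MV) (hMW : ∀ r ∈ Set.Icc s t, ‖W r‖ ≤ MW)
    (hVx : ∀ y : X, ContinuousOn (fun r => V r y) (Set.Icc s t))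
    (hWx : ∀ y : X, ContinuousOn (fun r => W r y) (Set.Icc s t))
    (hVn : ContinuousOn V (Set.Ico s t))
    (hVc : ∀ r ∈ Set.Ico s t, IsCompactOperator (V r)) :
    IsCompactOperator (fun x : X => ∫ r in s..t, V r (W r x)) := by
  have hMV0 : 0 ≤ MV := le_trans (norm_nonneg _) (hMV s ⟨le_rfl, hst.le⟩)
  have hMW0 : 0 ≤ MW := le_trans (norm_nonneg _) (hMW s ⟨le_rfl, hst.le⟩)
  have hFx : ∀ y : X, ContinuousOn (fun r => V r (W r y)) (Set.Icc s t) :=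
    fun y => strong_comp hMV hVx hWx y
  have hFC : ∀ r ∈ Set.Icc s t, ‖(V r).comp (W r)‖ ≤ MV * MW := by
    intro r hr
    exact le_trans ((V r).opNorm_comp_le (W r))
      (mul_le_mul (hMV r hr) (hMW r hr) (norm_nonneg _) hMV0)
  have hFx' : ∀ y : X, ContinuousOn (fun r => ((V r).comp (W r)) y) (Set.Icc s t) := hFx
  set K : X →L[ℝ] X := intOp (fun r => (V r).comp (W r)) s t (MV * MW) hst.le hFx' hFC
    with hK_def
  suffices h : IsCompactOperator K by exact h
  have hmem : K ∈ closure {f : X →L[ℝ] X | IsCompactOperator f} := by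
    rw [Metric.mem_closure_iff]
    intro ε hε
    -- choose the cut point b
    set M : ℝ := MV * MW + 1 with hM_def
    have hM : 0 < M := by nlinarith
    set δ : ℝ := min ((t - s) / 2) (ε / (4 * M)) with hδ_def
    have hδ0 : 0 < δ := lt_min (by linarith) (by positivity)
    set b : ℝ := t - δ with hb_def
    have hδle : δ ≤ (t - s) / 2 := min_le_left _ _
    have hδle' : δ ≤ ε / (4 * M) := min_le_right _ _
    have hsb : s ≤ b := by rw [hb_def]; linarith
    have hbt : b < t := by rw [hb_def]; linarith
    have hIsb : Set.Icc s b ⊆ Set.Icc s t := Set.Icc_subset_Icc le_rfl hbt.le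
    -- Riemann approximation of the integral over [s,b]
    obtain ⟨T, hT, hTapprox⟩ := riemann_approx V W s b hsb MW
      (fun r hr => hMW r (hIsb hr)) (fun y => (hWx y).mono hIsb)
      (fun y => (hFx y).mono hIsb)
      (hVn.mono (fun r hr => ⟨hr.1, lt_of_le_of_lt hr.2 hbt⟩))
      (fun r hr => hVc r ⟨hr.1, lt_of_le_of_lt hr.2 hbt⟩)
      (ε / 4) (by positivity)
    refine ⟨T, hT, ?_⟩
    rw [dist_eq_norm]
    have hbound : ∀ x : X, ‖(K - T) x‖ ≤ (ε / 2) * ‖x‖ := by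
      intro x
      have hint1 : IntervalIntegrable (fun r => V r (W r x)) volume s b :=
        (((hFx x).mono hIsb).mono (by rw [Set.uIcc_of_le hsb])).intervalIntegrable
      have hint2 : IntervalIntegrable (fun r => V r (W r x)) volume b t :=
        (((hFx x).mono (Set.Icc_subset_Icc hsb le_rfl)).mono
          (by rw [Set.uIcc_of_le hbt.le])).intervalIntegrable
      have hKx : K x = (∫ r in s..b, V r (W r x)) + ∫ r in b..t, V r (W r x) :=
        (intervalIntegral.integral_add_adjacent_intervals hint1 hint2).symm
      have htail : ‖∫ r in b..t, V r (W r x)‖ ≤ (ε / 4) * ‖x‖ := by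
        have hb' : ∀ r ∈ Set.uIoc b t, ‖V r (W r x)‖ ≤ MV * MW * ‖x‖ := by
          intro r hr
          rw [Set.uIoc_of_le hbt.le] at hr
          have hrI : r ∈ Set.Icc s t := ⟨le_trans hsb hr.1.le, hr.2⟩
          calc ‖V r (W r x)‖ ≤ ‖V r‖ * ‖W r x‖ := (V r).le_opNorm _
            _ ≤ MV * (MW * ‖x‖) := mul_le_mul (hMV r hrI)
                (le_trans ((W r).le_opNorm x)
                  (mul_le_mul_of_nonneg_right (hMW r hrI) (norm_nonneg x)))
                (norm_nonneg _) hMV0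
            _ = MV * MW * ‖x‖ := by ring
        calc ‖∫ r in b..t, V r (W r x)‖ ≤ MV * MW * ‖x‖ * |t - b| :=
              intervalIntegral.norm_integral_le_of_norm_le_const hb'
          _ = MV * MW * δ * ‖x‖ := by
              rw [show t - b = δ by rw [hb_def]; ring, abs_of_nonneg hδ0.le]; ring
          _ ≤ (ε / 4) * ‖x‖ := by
              apply mul_le_mul_of_nonneg_right _ (norm_nonneg x)
              have : MV * MW * δ ≤ M * δ := by nlinarith
              have h2 : M * δ ≤ M * (ε / (4 * M)) := mul_le_mul_of_nonneg_left hδle' hM.le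
              have h3 : M * (ε / (4 * M)) = ε / 4 := by field_simp
              linarith
      calc ‖(K - T) x‖ = ‖((∫ r in s..b, V r (W r x)) - T x) + ∫ r in b..t, V r (W r x)‖ := by
            rw [ContinuousLinearMap.sub_apply, hKx]; congr 1; abel
        _ ≤ ‖(∫ r in s..b, V r (W r x)) - T x‖ + ‖∫ r in b..t, V r (W r x)‖ := norm_add_le _ _
        _ ≤ (ε / 4) * ‖x‖ + (ε / 4) * ‖x‖ := add_le_add (hTapprox x) htail
        _ = (ε / 2) * ‖x‖ := by ring
    have : ‖K - T‖ ≤ ε / 2 := ContinuousLinearMap.opNorm_le_bound _ (by linarith) hbound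
    linarith
  rw [isClosed_setOf_isCompactOperator.closure_eq] at hmem
  exact hmem

/-- One direction of the transfer: if `B t s x = A t s x + ∫ₛᵗ A t r (G r s x) dr` and
`A` is compact for `t - s > 0`, then so is `B`. -/
lemma one_dir {τ : ℝ} {A B G : ℝ → ℝ → X →L[ℝ] X} {MA MG : ℝ}
    (hA_strong : ∀ x : X, ContinuousOn (fun p : ℝ × ℝ => A p.1 p.2 x)
      {p : ℝ × ℝ | 0 ≤ p.2 ∧ p.2 ≤ p.1 ∧ p.1 ≤ τ})
    (hG_strong : ∀ x : X, ContinuousOn (fun p : ℝ × ℝ => G p.1 p.2 x)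
      {p : ℝ × ℝ | 0 ≤ p.2 ∧ p.2 ≤ p.1 ∧ p.1 ≤ τ})
    (hMA : ∀ t s : ℝ, 0 ≤ s → s ≤ t → t ≤ τ → ‖A t s‖ ≤ MA)
    (hMG : ∀ r s : ℝ, 0 ≤ s → s ≤ r → r ≤ τ → ‖G r s‖ ≤ MG)
    (hA_norm : ContinuousOn (fun p : ℝ × ℝ => A p.1 p.2)
      {p : ℝ × ℝ | 0 ≤ p.2 ∧ p.2 < p.1 ∧ p.1 ≤ τ})
    (hrep : ∀ t s : ℝ, 0 ≤ s → s ≤ t → t ≤ τ → ∀ x : X,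
      B t s x = A t s x + ∫ r in s..t, A t r (G r s x))
    (hAc : ∀ t s : ℝ, 0 ≤ s → s < t → t ≤ τ → IsCompactOperator (A t s)) :
    ∀ t s : ℝ, 0 ≤ s → s < t → t ≤ τ → IsCompactOperator (B t s) := by
  intro t s hs hst htτ
  have hfun : ⇑(B t s) = fun x => A t s x + ∫ r in s..t, A t r (G r s x) :=
    funext fun x => hrep t s hs hst.le htτ x
  rw [hfun]
  have hkey : IsCompactOperator (fun x : X => ∫ r in s..t, A t r (G r s x)) := by
    apply key_lemma s t hst (fun r => A t r) (fun r => G r s) MA MG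
    · exact fun r hr => hMA t r (le_trans hs hr.1) hr.2 htτ
    · exact fun r hr => hMG r s hs hr.1 (le_trans hr.2 htτ)
    · intro y
      exact (hA_strong y).comp
        ((continuous_const.prodMk continuous_id).continuousOn
          (s := Set.Icc s t))
        (fun r hr => ⟨le_trans hs hr.1, hr.2, htτ⟩)
    · intro y
      exact (hG_strong y).comp
        ((continuous_id.prodMk continuous_const).continuousOn
          (s := Set.Icc s t))
        (fun r hr => ⟨hs, hr.1, le_trans hr.2 htτ⟩)
    · exact hA_norm.comp
        ((continuous_const.prodMk continuous_id).continuousOn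
          (s := Set.Ico s t))
        (fun r hr => ⟨le_trans hs hr.1, hr.2, htτ⟩)
    · exact fun r hr => hAc t r (le_trans hs hr.1) hr.2 htτ
  exact (hAc t s hs hst htτ).add hkey


end Aux

/-- Given the mutual integral representations
`R(t,s)x = U(t,s)x + ∫ₛᵗ U(t,r)Q(r,s)x dr` and
`U(t,s)x = R(t,s)x + ∫ₛᵗ R(t,r)P(r,s)x dr`,
`U(t,s)` is compact for all `t - s > 0` iff `R(t,s)` is compact for all `t - s > 0`. -/
theorem stmt_2
    {X : Type*} [NormedAddCommGroup X] [NormedSpace ℝ X] [CompleteSpace X]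
    (τ : ℝ) (hτ : 0 < τ)
    (U R Q P : ℝ → ℝ → X →L[ℝ] X)
    -- strong continuity on the triangle 0 ≤ s ≤ t ≤ τ
    (hU_strong : ∀ x : X, ContinuousOn (fun p : ℝ × ℝ => U p.1 p.2 x)
      {p : ℝ × ℝ | 0 ≤ p.2 ∧ p.2 ≤ p.1 ∧ p.1 ≤ τ})
    (hR_strong : ∀ x : X, ContinuousOn (fun p : ℝ × ℝ => R p.1 p.2 x)
      {p : ℝ × ℝ | 0 ≤ p.2 ∧ p.2 ≤ p.1 ∧ p.1 ≤ τ})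
    -- uniform boundedness in operator norm
    (MU MR MQ MP : ℝ)
    (hMU : ∀ t s : ℝ, 0 ≤ s → s ≤ t → t ≤ τ → ‖U t s‖ ≤ MU)
    (hMR : ∀ t s : ℝ, 0 ≤ s → s ≤ t → t ≤ τ → ‖R t s‖ ≤ MR)
    (hMQ : ∀ r s : ℝ, 0 ≤ s → s ≤ r → r ≤ τ → ‖Q r s‖ ≤ MQ)
    (hMP : ∀ r s : ℝ, 0 ≤ s → s ≤ r → r ≤ τ → ‖P r s‖ ≤ MP)
    -- operator-norm continuity on {0 ≤ s < t ≤ τ}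
    (hU_norm : ContinuousOn (fun p : ℝ × ℝ => U p.1 p.2)
      {p : ℝ × ℝ | 0 ≤ p.2 ∧ p.2 < p.1 ∧ p.1 ≤ τ})
    (hR_norm : ContinuousOn (fun p : ℝ × ℝ => R p.1 p.2)
      {p : ℝ × ℝ | 0 ≤ p.2 ∧ p.2 < p.1 ∧ p.1 ≤ τ})
    -- evolution-system properties of U
    (hU_id : ∀ t : ℝ, 0 ≤ t → t ≤ τ → U t t = ContinuousLinearMap.id ℝ X)
    (hU_comp : ∀ t r s : ℝ, 0 ≤ s → s ≤ r → r ≤ t → t ≤ τ →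
      (U t r).comp (U r s) = U t s)
    -- strong continuity of Q and P on the triangle
    (hQ_strong : ∀ x : X, ContinuousOn (fun p : ℝ × ℝ => Q p.1 p.2 x)
      {p : ℝ × ℝ | 0 ≤ p.2 ∧ p.2 ≤ p.1 ∧ p.1 ≤ τ})
    (hP_strong : ∀ x : X, ContinuousOn (fun p : ℝ × ℝ => P p.1 p.2 x)
      {p : ℝ × ℝ | 0 ≤ p.2 ∧ p.2 ≤ p.1 ∧ p.1 ≤ τ})
    -- the two integral representations
    (hRU : ∀ t s : ℝ, 0 ≤ s → s ≤ t → t ≤ τ → ∀ x : X,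
      R t s x = U t s x + ∫ r in s..t, U t r (Q r s x))
    (hUR : ∀ t s : ℝ, 0 ≤ s → s ≤ t → t ≤ τ → ∀ x : X,
      U t s x = R t s x + ∫ r in s..t, R t r (P r s x)) :
    (∀ t s : ℝ, 0 ≤ s → s < t → t ≤ τ → IsCompactOperator (U t s)) ↔
    (∀ t s : ℝ, 0 ≤ s → s < t → t ≤ τ → IsCompactOperator (R t s)) := by
  constructor
  · intro hU
    exact one_dir hU_strong hQ_strong hMU hMQ hU_norm hRU hU
  · intro hR
    exact one_dir hR_strong hP_strong hMR hMP hR_norm hUR hR
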